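/- Let Q be a symmetric positive-definite n×n M-matrix (i.e., Q ≻ 0 and Q_{ij} ≤ 0 for i ≠ j) with all eigenvalues at most L, and let g(x) = ⟨x, Qx⟩/2 - ⟨b, x⟩ for some b ∈ ℝⁿ. If x ∈ ℝⁿ satisfies ∇g(x) ≤ 0 componentwise, then the gradient-descent update x⁺ = x - (1/L)∇g(x) also satisfies ∇g(x⁺) ≤ 0 componentwise. -/
import Mathlib


open Matrix

/-- For a symmetric positive-definite M-matrix `Q` with eigenvalues at most `L`
and `g x = ⟨x, Qx⟩/2 - ⟨b, x⟩` (so `∇g x = Q x - b`), if `∇g(x) ≤ 0` componentwise then the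
gradient step `x⁺ = x - (1/L) ∇g(x)` also satisfies `∇g(x⁺) ≤ 0` componentwise. -/
theorem stmt_0 (n : ℕ) (Q : Matrix (Fin n) (Fin n) ℝ) (b : Fin n → ℝ) (L : ℝ)
    (hQsymm : Q.IsSymm) (hQpd : Q.PosDef)
    (hM : ∀ i j : Fin n, i ≠ j → Q i j ≤ 0)
    (hL : 0 < L)
    (hEig : ∀ x : Fin n → ℝ, x ⬝ᵥ Q.mulVec x ≤ L * (x ⬝ᵥ x))
    (x : Fin n → ℝ)
    (hgrad : ∀ i, (Q.mulVec x - b) i ≤ 0) :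
    ∀ i, (Q.mulVec (x - (1 / L) • (Q.mulVec x - b)) - b) i ≤ 0 := by
  intro i
  set g := Q.mulVec x - b with hg
  have hdiag : ∀ j : Fin n, Q j j ≤ L := by
    intro j
    have h := hEig (Pi.single j 1)
    simpa [dotProduct, Pi.single_apply, mulVec, Finset.sum_ite_eq,
      Finset.sum_ite_eq'] using h
  have key : (Q.mulVec (x - (1 / L) • g) - b) i
      = ∑ j, ((if i = j then (1:ℝ) else 0) - Q i j / L) * g j := by
    have : Q.mulVec (x - (1 / L) • g) = Q.mulVec x - (1/L) • Q.mulVec g := by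
      rw [Matrix.mulVec_sub, Matrix.mulVec_smul]
    rw [this]
    have : (Q.mulVec x - (1/L) • Q.mulVec g - b) i = g i - (1/L) * (Q.mulVec g) i := by
      simp [hg]; ring
    rw [this]
    have hsplit : ∀ j, ((if i = j then (1:ℝ) else 0) - Q i j / L) * g j
        = (if i = j then g j else 0) - (Q i j / L) * g j := by
      intro j; split <;> ring
    simp only [hsplit, Finset.sum_sub_distrib, Finset.sum_ite_eq, Finset.mem_univ, if_true]
    simp only [mulVec, dotProduct, Finset.mul_sum]
    congr 1
    apply Finset.sum_congr rfl
    intro j _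
    ring
  rw [key]
  apply Finset.sum_nonpos
  intro j _
  apply mul_nonpos_of_nonneg_of_nonpos
  · by_cases h : i = j
    · subst h
      rw [if_pos rfl]
      have : Q i i / L ≤ 1 := by
        rw [div_le_one hL]; exact hdiag i
      linarith
    · rw [if_neg h]
      have := hM i j h
      have : Q i j / L ≤ 0 := div_nonpos_of_nonpos_of_nonneg this hL.le
      linarith
  · exact hgrad j
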